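/- arXiv:1404.5555 — 5 statements merged into one kernel-verified Lean document; each statement's English description precedes it below -/
import Mathlib

section
/- Let 0 < a < 1 and r_0 = 2/(1-a). With f(x) = x·e^{r(1-x)(x-a)}, the Schwarzian derivative of f at the fixed point x = 1 when r = r_0 equals 2r_0(a - 4 - 3r_0), which is negative for all a ∈ (0,1). -/
open Real

theorem stmt_6 (a r0 : ℝ) (ha : 0 < a) (ha1 : a < 1) (hr0 : r0 = 2 / (1 - a))
    (f : ℝ → ℝ) (hf : f = fun x => x * Real.exp (r0 * (1 - x) * (x - a))) :
    deriv^[3] f 1 / deriv f 1 - (3 / 2) * (deriv^[2] f 1 / deriv f 1) ^ 2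
      = 2 * r0 * (a - 4 - 3 * r0) ∧
    2 * r0 * (a - 4 - 3 * r0) < 0 := by
  have h1a : (0:ℝ) < 1 - a := by linarith
  have hfa : r0 * (1 - a) = 2 := by
    rw [hr0]; field_simp
  have hr0pos : 0 < r0 := by
    rw [hr0]; positivity
  -- derivative of the exponent
  have hg : ∀ x : ℝ, HasDerivAt (fun x => r0 * (1 - x) * (x - a))
      (r0 * (1 + a - 2 * x)) x := by
    intro x
    have h1 : HasDerivAt (fun x : ℝ => r0 * (1 - x)) (r0 * (-1)) x := by
      simpa using (((hasDerivAt_id x).const_sub 1).const_mul r0)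
    have h2 : HasDerivAt (fun x : ℝ => x - a) 1 x := by
      simpa using (hasDerivAt_id x).sub_const a
    have := h1.mul h2
    exact this.congr_deriv (by ring)
  -- general product lemma: P(x) * exp(g x)
  have key : ∀ (P P' : ℝ → ℝ) (x : ℝ), HasDerivAt P (P' x) x →
      HasDerivAt (fun x => P x * Real.exp (r0 * (1 - x) * (x - a)))
        ((P' x + P x * (r0 * (1 + a - 2 * x))) * Real.exp (r0 * (1 - x) * (x - a))) x := by
    intro P P' x hP
    have hE := (hg x).exp
    have := hP.mul hE
    exact this.congr_deriv (by ring)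
  -- first derivative
  have hd1 : deriv f = fun x => (1 + x * (r0 * (1 + a - 2 * x))) *
      Real.exp (r0 * (1 - x) * (x - a)) := by
    funext x
    rw [hf]
    exact (key (fun x => x) (fun _ => 1) x (hasDerivAt_id x)).deriv
  -- second derivative
  have hP2 : ∀ x : ℝ, HasDerivAt (fun x => 1 + x * (r0 * (1 + a - 2 * x)))
      (r0 * (1 + a - 2 * x) + x * (-2 * r0)) x := by
    intro x
    have hgd : HasDerivAt (fun x : ℝ => r0 * (1 + a - 2 * x)) (-2 * r0) x := by
      have : HasDerivAt (fun x : ℝ => 1 + a - 2 * x) (-2) x := by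
        simpa using ((hasDerivAt_id x).const_mul 2).const_sub (1 + a)
      have := this.const_mul r0
      exact this.congr_deriv (by ring)
    have := ((hasDerivAt_id x).mul hgd).const_add 1
    simp only [id_eq] at this
    exact this.congr_deriv (by ring)
  have hd2 : deriv (deriv f) = fun x =>
      ((r0 * (1 + a - 2 * x) + x * (-2 * r0)) +
        (1 + x * (r0 * (1 + a - 2 * x))) * (r0 * (1 + a - 2 * x))) *
      Real.exp (r0 * (1 - x) * (x - a)) := by
    funext x
    rw [hd1]
    exact (key _ (fun x => r0 * (1 + a - 2 * x) + x * (-2 * r0)) x (hP2 x)).deriv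
  -- third derivative
  have hP3 : ∀ x : ℝ, HasDerivAt
      (fun x => (r0 * (1 + a - 2 * x) + x * (-2 * r0)) +
        (1 + x * (r0 * (1 + a - 2 * x))) * (r0 * (1 + a - 2 * x)))
      ((-4 * r0) + (r0 * (1 + a - 2 * x) + x * (-2 * r0)) * (r0 * (1 + a - 2 * x)) +
        (1 + x * (r0 * (1 + a - 2 * x))) * (-2 * r0)) x := by
    intro x
    have hgd : HasDerivAt (fun x : ℝ => r0 * (1 + a - 2 * x)) (-2 * r0) x := by
      have : HasDerivAt (fun x : ℝ => 1 + a - 2 * x) (-2) x := by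
        simpa using ((hasDerivAt_id x).const_mul 2).const_sub (1 + a)
      have := this.const_mul r0
      exact this.congr_deriv (by ring)
    have hA : HasDerivAt (fun x : ℝ => r0 * (1 + a - 2 * x) + x * (-2 * r0))
        (-2 * r0 + (-2 * r0)) x := by
      have := hgd.add ((hasDerivAt_id x).mul_const (-2 * r0))
      exact this.congr_deriv (by ring)
    have := hA.add ((hP2 x).mul hgd)
    exact this.congr_deriv (by ring)
  have hd3 : deriv (deriv (deriv f)) = fun x =>
      (((-4 * r0) + (r0 * (1 + a - 2 * x) + x * (-2 * r0)) * (r0 * (1 + a - 2 * x)) +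
        (1 + x * (r0 * (1 + a - 2 * x))) * (-2 * r0)) +
       ((r0 * (1 + a - 2 * x) + x * (-2 * r0)) +
        (1 + x * (r0 * (1 + a - 2 * x))) * (r0 * (1 + a - 2 * x))) * (r0 * (1 + a - 2 * x))) *
      Real.exp (r0 * (1 - x) * (x - a)) := by
    funext x
    rw [hd2]
    exact (key _ (fun x => (-4 * r0) + (r0 * (1 + a - 2 * x) + x * (-2 * r0)) * (r0 * (1 + a - 2 * x)) +
      (1 + x * (r0 * (1 + a - 2 * x))) * (-2 * r0)) x (hP3 x)).deriv
  -- evaluate at x = 1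
  have hexp1 : Real.exp (r0 * (1 - 1) * (1 - a)) = 1 := by norm_num
  have hv1 : deriv f 1 = -1 := by
    rw [hd1]
    simp only
    rw [hexp1]
    nlinarith [hfa]
  have hv2 : deriv (deriv f) 1 = -2 * r0 := by
    rw [hd2]
    simp only
    rw [hexp1]
    nlinarith [hfa, sq_nonneg r0]
  have hv3 : deriv (deriv (deriv f)) 1 = 6 * r0 + 4 := by
    rw [hd3]
    simp only
    rw [hexp1]
    nlinarith [hfa, sq_nonneg r0, sq_nonneg (r0 * (a - 1) + 2)]
  have hit2 : deriv^[2] f 1 = -2 * r0 := by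
    simpa [Function.iterate_succ, Function.comp] using hv2
  have hit3 : deriv^[3] f 1 = 6 * r0 + 4 := by
    simpa [Function.iterate_succ, Function.comp] using hv3
  constructor
  · rw [hit3, hit2, hv1]
    have : r0 * a = r0 - 2 := by linarith [hfa]
    field_simp
    nlinarith [this]
  · have h2 : a - 4 - 3 * r0 < 0 := by linarith
    have := mul_pos (by positivity : (0:ℝ) < 2 * r0) (by linarith : 0 < -(a - 4 - 3 * r0))
    nlinarith
end

section
/- Let 0 < a < 1 and 0 < r < 1/(1-a) (i.e. r < r_0/2 where r_0 = 2/(1-a)). For the map f(x) = x·e^{r(1-x)(x-a)}: if x ∈ (a,1) then a < x < f(x) < 1, and if x ∈ (1, x_m] then 1 < f(x) < x, where x_m > 1 is the critical point of f. Consequently every orbit starting in (a, x_m] converges to 1. -/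
open Real Filter Set

theorem stmt_9 (a r : ℝ) (ha : 0 < a) (ha1 : a < 1) (hr : 0 < r)
    (hr2 : r < 1 / (1 - a))
    (f : ℝ → ℝ) (hf : f = fun x => x * Real.exp (r * (1 - x) * (x - a)))
    (xm : ℝ)
    (hxm : xm = (1 + a) / 4 + Real.sqrt ((a + 1) ^ 2 * r ^ 2 + 8 * r) / (4 * r))
    (hxm1 : 1 < xm) :
    (∀ x ∈ Set.Ioo a 1, a < x ∧ x < f x ∧ f x < 1) ∧
    (∀ x ∈ Set.Ioc 1 xm, 1 < f x ∧ f x < x) ∧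
    (∀ x0 ∈ Set.Ioc a xm, Tendsto (fun t => f^[t] x0) atTop (nhds 1)) := by
  have h1a : 0 < 1 - a := by linarith
  have hra : r * (1 - a) < 1 := (lt_div_iff₀ h1a).mp hr2
  have hcont : Continuous f := by rw [hf]; continuity
  have hf1 : f 1 = 1 := by rw [hf]; simp
  -- key identity for xm
  have hsq : Real.sqrt ((a + 1) ^ 2 * r ^ 2 + 8 * r) ^ 2 = (a + 1) ^ 2 * r ^ 2 + 8 * r := by
    apply Real.sq_sqrt; positivity
  have hkey : r * xm * (2 * xm - (1 + a)) = 1 := by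
    have h4 : 4 * r * xm = (1 + a) * r + Real.sqrt ((a + 1) ^ 2 * r ^ 2 + 8 * r) := by
      rw [hxm]; field_simp
    have h5 : (4 * r * xm - (1 + a) * r) ^ 2 = (a + 1) ^ 2 * r ^ 2 + 8 * r := by
      rw [show 4 * r * xm - (1 + a) * r = Real.sqrt ((a + 1) ^ 2 * r ^ 2 + 8 * r) by linarith]
      exact hsq
    have h6 : (8 * r) * (r * xm * (2 * xm - (1 + a))) = (8 * r) * 1 := by
      linear_combination h5
    exact mul_left_cancel₀ (by positivity) h6
  -- Part 1
  have P1 : ∀ x ∈ Set.Ioo a 1, a < x ∧ x < f x ∧ f x < 1 := by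
    rintro x ⟨hax, hx1⟩
    have hx0 : 0 < x := lt_trans ha hax
    set y := r * (1 - x) * (x - a) with hy
    have hypos : 0 < y := by
      apply mul_pos (mul_pos hr (by linarith)) (by linarith)
    refine ⟨hax, ?_, ?_⟩
    · have h1 : 1 < Real.exp y := by
        rw [show (1:ℝ) = Real.exp 0 by simp]
        exact Real.exp_lt_exp.mpr hypos
      simp only [hf]
      rw [← hy]
      nlinarith [mul_pos hx0 (show (0:ℝ) < Real.exp y - 1 by linarith)]
    · have hy1 : y < 1 - x := by
        have : r * (x - a) < 1 := by nlinarith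
        nlinarith
      have h2 : 1 - y < Real.exp (-y) := by
        have := Real.add_one_lt_exp (x := -y) (by linarith)
        linarith
      have h3 : x < Real.exp (-y) := by linarith
      have h4 : x * Real.exp y < Real.exp (-y) * Real.exp y :=
        mul_lt_mul_of_pos_right h3 (Real.exp_pos y)
      rw [← Real.exp_add, neg_add_cancel, Real.exp_zero] at h4
      simp only [hf]; rw [← hy]; exact h4
  -- Part 2
  have P2 : ∀ x ∈ Set.Ioc 1 xm, 1 < f x ∧ f x < x := by
    rintro x ⟨hx1, hxm2⟩
    have hx0 : 0 < x := by linarith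
    set y := r * (1 - x) * (x - a) with hy
    have hyneg : y < 0 := by
      have hp : 0 < r * (x - 1) * (x - a) :=
        mul_pos (mul_pos hr (by linarith)) (by linarith)
      linarith [hy, show y + r * (x - 1) * (x - a) = 0 by rw [hy]; ring]
    constructor
    · -- 1 < f x
      have hrx : r * x * (x - a) < 1 := by
        have h1 : r * x * (x - a) ≤ r * xm * (xm - a) := by
          nlinarith [mul_nonneg (mul_nonneg hr.le (sub_nonneg.mpr hxm2)) (show (0:ℝ) ≤ xm + x - a by linarith)]
        have h2 : r * xm * (xm - a) < r * xm * (2 * xm - (1 + a)) := by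
          have : xm - a < 2 * xm - (1 + a) := by linarith
          exact mul_lt_mul_of_pos_left this (by positivity)
        rw [hkey] at h2; linarith
      have h3 : 1 + y < Real.exp y := by
        have := Real.add_one_lt_exp (x := y) (by linarith)
        linarith
      have h4 : x * (1 + y) < x * Real.exp y := mul_lt_mul_of_pos_left h3 hx0
      have h5 : 1 ≤ x * (1 + y) := by
        have hxy : x * y = -((x - 1) * (r * x * (x - a))) := by rw [hy]; ring
        nlinarith
      simp only [hf]; rw [← hy]; exact lt_of_le_of_lt h5 h4
    · -- f x < x
      have h1 : Real.exp y < 1 := by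
        rw [show (1:ℝ) = Real.exp 0 by simp]
        exact Real.exp_lt_exp.mpr hyneg
      simp only [hf]
      rw [← hy]
      nlinarith [mul_pos hx0 (show (0:ℝ) < 1 - Real.exp y by linarith)]
  refine ⟨P1, P2, ?_⟩
  intro x0 hx0
  rcases lt_trichotomy x0 1 with hlt | heq | hgt
  · -- x0 ∈ (a, 1): increasing orbit
    have hx0mem : x0 ∈ Set.Ioo a 1 := ⟨hx0.1, hlt⟩
    set u : ℕ → ℝ := fun n => f^[n] x0 with hu
    have hmem : ∀ n, u n ∈ Set.Ioo a 1 := by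
      intro n
      induction n with
      | zero => exact hx0mem
      | succ n ih =>
        have : u (n + 1) = f (u n) := Function.iterate_succ_apply' f n x0
        rw [this]
        rcases P1 _ ih with ⟨h1, h2, h3⟩
        exact ⟨lt_trans ih.1 h2, h3⟩
    have hmono : Monotone u := by
      apply monotone_nat_of_le_succ
      intro n
      have : u (n + 1) = f (u n) := Function.iterate_succ_apply' f n x0
      rw [this]
      exact (P1 _ (hmem n)).2.1.le
    have hbdd : BddAbove (Set.range u) := ⟨1, by rintro _ ⟨n, rfl⟩; exact (hmem n).2.le⟩
    have htend : Tendsto u atTop (nhds (⨆ n, u n)) := tendsto_atTop_ciSup hmono hbdd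
    set L := ⨆ n, u n with hL
    have hshift : (fun n => u (n + 1)) = f ∘ u := by
      funext n; exact Function.iterate_succ_apply' f n x0
    have ht1 : Tendsto (fun n => u (n + 1)) atTop (nhds L) :=
      htend.comp (tendsto_add_atTop_nat 1)
    have ht2 : Tendsto (fun n => u (n + 1)) atTop (nhds (f L)) := by
      rw [hshift]; exact (hcont.tendsto L).comp htend
    have hfix : f L = L := tendsto_nhds_unique ht2 ht1
    have hL1 : L ≤ 1 := ciSup_le fun n => (hmem n).2.le
    have haL : a < L := lt_of_lt_of_le hx0.1 (le_ciSup hbdd 0)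
    have hLeq : L = 1 := by
      by_contra h
      have hLmem : L ∈ Set.Ioo a 1 := ⟨haL, lt_of_le_of_ne hL1 h⟩
      exact absurd hfix.symm (ne_of_lt (P1 L hLmem).2.1)
    rw [← hLeq]; exact htend
  · -- x0 = 1
    have : ∀ n, f^[n] x0 = 1 := by
      intro n; rw [heq]; exact Function.iterate_fixed hf1 n
    simp only [this]
    exact tendsto_const_nhds
  · -- x0 ∈ (1, xm]: decreasing orbit
    have hx0mem : x0 ∈ Set.Ioc 1 xm := ⟨hgt, hx0.2⟩
    set u : ℕ → ℝ := fun n => f^[n] x0 with hu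
    have hmem : ∀ n, u n ∈ Set.Ioc 1 xm := by
      intro n
      induction n with
      | zero => exact hx0mem
      | succ n ih =>
        have : u (n + 1) = f (u n) := Function.iterate_succ_apply' f n x0
        rw [this]
        rcases P2 _ ih with ⟨h1, h2⟩
        exact ⟨h1, le_trans h2.le ih.2⟩
    have hanti : Antitone u := by
      apply antitone_nat_of_succ_le
      intro n
      have : u (n + 1) = f (u n) := Function.iterate_succ_apply' f n x0
      rw [this]
      exact (P2 _ (hmem n)).2.le
    have hbdd : BddBelow (Set.range u) := ⟨1, by rintro _ ⟨n, rfl⟩; exact (hmem n).1.le⟩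
    have htend : Tendsto u atTop (nhds (⨅ n, u n)) := tendsto_atTop_ciInf hanti hbdd
    set L := ⨅ n, u n with hL
    have hshift : (fun n => u (n + 1)) = f ∘ u := by
      funext n; exact Function.iterate_succ_apply' f n x0
    have ht1 : Tendsto (fun n => u (n + 1)) atTop (nhds L) :=
      htend.comp (tendsto_add_atTop_nat 1)
    have ht2 : Tendsto (fun n => u (n + 1)) atTop (nhds (f L)) := by
      rw [hshift]; exact (hcont.tendsto L).comp htend
    have hfix : f L = L := tendsto_nhds_unique ht2 ht1
    have hL1 : 1 ≤ L := le_ciInf fun n => (hmem n).1.le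
    have hLxm : L ≤ xm := le_trans (ciInf_le hbdd 0) (hmem 0).2
    have hLeq : L = 1 := by
      by_contra h
      have hLmem : L ∈ Set.Ioc 1 xm := ⟨lt_of_le_of_ne hL1 (Ne.symm h), hLxm⟩
      exact absurd hfix (ne_of_lt (P2 L hLmem).2)
    rw [← hLeq]; exact htend
end

section
/- Let 0 < a < 1 and r > r_0 = 2/(1-a). Define ḡ(x) = (1-x)(x-a) + (1 - f(x))(f(x) - a) where f(x) = x·e^{r(1-x)(x-a)}. Then ḡ(a) = ḡ(1) = 0, ḡ'(a) = (1-a)(2 + ra(1-a)) > 0, and ḡ'(1) = (a-1)(2 + r(a-1)) > 0; consequently ḡ has a zero in (a,1) and a zero in (1,∞), so f has a positive 2-cycle {x̄₁, x̄₂} with a < x̄₁ < 1 < x̄₂. -/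
open Real Set Topology Filter

theorem stmt_11 (a r : ℝ) (ha : 0 < a) (ha1 : a < 1) (hr : 2 / (1 - a) < r)
    (f : ℝ → ℝ) (hf : f = fun x => x * Real.exp (r * (1 - x) * (x - a)))
    (g : ℝ → ℝ) (hg : g = fun x => (1 - x) * (x - a) + (1 - f x) * (f x - a)) :
    g a = 0 ∧ g 1 = 0 ∧
    deriv g a = (1 - a) * (2 + r * a * (1 - a)) ∧ 0 < deriv g a ∧
    deriv g 1 = (a - 1) * (2 + r * (a - 1)) ∧ 0 < deriv g 1 ∧
    ∃ x1 ∈ Set.Ioo a 1, ∃ x2 ∈ Set.Ioi (1 : ℝ),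
      g x1 = 0 ∧ g x2 = 0 ∧ f x1 = x2 ∧ f x2 = x1 := by
  have h1a : (0:ℝ) < 1 - a := by linarith
  have hr0 : 0 < r := lt_trans (div_pos two_pos h1a) hr
  have hr2 : 2 < r * (1 - a) := (div_lt_iff₀ h1a).mp hr
  have hfx : ∀ x, f x = x * Real.exp (r * (1 - x) * (x - a)) := fun x => by rw [hf]
  have hgx : ∀ x, g x = (1 - x) * (x - a) + (1 - f x) * (f x - a) := fun x => by rw [hg]
  have hfa : f a = a := by rw [hfx a]; simp
  have hf1 : f 1 = 1 := by rw [hfx 1]; simp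
  have hga : g a = 0 := by rw [hgx a, hfa]; ring
  have hg1 : g 1 = 0 := by rw [hgx 1, hf1]; ring
  -- f ∘ f
  have hff : ∀ x, f (f x) = x * Real.exp (r * g x) := by
    intro x
    rw [hfx (f x), hgx x]
    nth_rewrite 1 [hfx x]
    rw [mul_assoc, ← Real.exp_add]
    congr 1
    ring
  -- derivatives
  have hfd : ∀ x : ℝ, HasDerivAt f
      (Real.exp (r * (1 - x) * (x - a)) * (1 + x * (r * (1 + a - 2 * x)))) x := by
    intro x
    rw [hf]
    have hu : HasDerivAt (fun y : ℝ => r * (1 - y) * (y - a)) (r * (1 + a - 2 * x)) x := by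
      have h1 : HasDerivAt (fun y : ℝ => r * (1 - y)) (-r) x := by
        simpa using (((hasDerivAt_const x (1:ℝ)).sub (hasDerivAt_id' (x := x))).const_mul r)
      have h2 : HasDerivAt (fun y : ℝ => y - a) 1 x := (hasDerivAt_id' (x := x)).sub_const a
      have := h1.fun_mul h2
      refine this.congr_deriv ?_
      first
      | ring
      | (simp only [id_eq]; ring)
    have := (hasDerivAt_id' (x := x)).fun_mul hu.exp
    refine this.congr_deriv ?_
    first
      | ring
      | (simp only [id_eq]; ring)
  have hgd : ∀ x : ℝ, HasDerivAt g
      ((1 + a - 2 * x) + (1 + a - 2 * f x) *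
        (Real.exp (r * (1 - x) * (x - a)) * (1 + x * (r * (1 + a - 2 * x))))) x := by
    intro x
    rw [hg]
    have hp : HasDerivAt (fun y : ℝ => (1 - y) * (y - a)) (1 + a - 2 * x) x := by
      have := ((hasDerivAt_const x (1:ℝ)).fun_sub (hasDerivAt_id' (x := x))).fun_mul
        ((hasDerivAt_id' (x := x)).sub_const a)
      refine this.congr_deriv ?_
      first
      | ring
      | (simp only [id_eq]; ring)
    have hq := ((hasDerivAt_const x (1:ℝ)).fun_sub (hfd x)).fun_mul ((hfd x).sub_const a)
    have := hp.fun_add hq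
    refine this.congr_deriv ?_
    first
      | ring
      | (simp only [id_eq]; ring)
  have hda : deriv g a = (1 - a) * (2 + r * a * (1 - a)) := by
    rw [(hgd a).deriv, hfa]
    simp only [sub_self, mul_zero, Real.exp_zero]
    ring
  have hd1 : deriv g 1 = (a - 1) * (2 + r * (a - 1)) := by
    rw [(hgd 1).deriv, hf1]
    simp only [sub_self, zero_mul, mul_zero, Real.exp_zero]
    ring
  have hdapos : 0 < deriv g a := by rw [hda]; nlinarith [mul_pos (mul_pos hr0 ha) h1a]
  have hd1pos : 0 < deriv g 1 := by rw [hd1]; nlinarith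
  have hcont : Continuous g := by
    rw [hg, hf]
    fun_prop
  -- point with g > 0 just right of a
  have hda' : HasDerivAt g (deriv g a) a := by rw [(hgd a).deriv]; exact hgd a
  have hd1' : HasDerivAt g (deriv g 1) 1 := by rw [(hgd 1).deriv]; exact hgd 1
  have hsA : ∀ᶠ y in 𝓝[≠] a, 0 < slope g a y :=
    (hasDerivAt_iff_tendsto_slope.mp hda').eventually (eventually_gt_nhds hdapos)
  have hleA : 𝓝[>] a ≤ 𝓝[≠] a :=
    nhdsWithin_mono a (fun y hy => Set.mem_compl_singleton_iff.mpr (ne_of_gt hy))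
  have hmemA : ∀ᶠ y in 𝓝[>] a, y ∈ Ioo a 1 :=
    Filter.eventually_of_mem (Ioo_mem_nhdsGT_of_mem ⟨le_refl a, ha1⟩) (fun y hy => hy)
  obtain ⟨y0, hy0s, hy0m⟩ := ((hsA.filter_mono hleA).and hmemA).exists
  have hgy0 : 0 < g y0 := by
    have hslope : 0 < (g y0 - g a) / (y0 - a) := by
      simpa [slope_def_field] using hy0s
    rcases div_pos_iff.mp hslope with ⟨h1, _⟩ | ⟨_, h2⟩
    · linarith
    · exfalso; have : a < y0 := hy0m.1; linarith
  -- point with g < 0 just left of 1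
  have hsB : ∀ᶠ y in 𝓝[≠] (1:ℝ), 0 < slope g 1 y :=
    (hasDerivAt_iff_tendsto_slope.mp hd1').eventually (eventually_gt_nhds hd1pos)
  have hleB : 𝓝[<] (1:ℝ) ≤ 𝓝[≠] (1:ℝ) :=
    nhdsWithin_mono 1 (fun y hy => Set.mem_compl_singleton_iff.mpr (ne_of_lt hy))
  have hmemB : ∀ᶠ y in 𝓝[<] (1:ℝ), y ∈ Ioo y0 1 :=
    Filter.eventually_of_mem (Ioo_mem_nhdsLT_of_mem ⟨hy0m.2, le_refl 1⟩) (fun y hy => hy)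
  obtain ⟨y1, hy1s, hy1m⟩ := ((hsB.filter_mono hleB).and hmemB).exists
  have hgy1 : g y1 < 0 := by
    have hslope : 0 < (g y1 - g 1) / (y1 - 1) := by
      simpa [slope_def_field] using hy1s
    rcases div_pos_iff.mp hslope with ⟨_, h2⟩ | ⟨h1, _⟩
    · exfalso; have : y1 < 1 := hy1m.2; linarith
    · linarith
  -- IVT
  have h01 : y0 ≤ y1 := le_of_lt hy1m.1
  have hivt : (0:ℝ) ∈ g '' Ioo y0 y1 :=
    intermediate_value_Ioo' h01 hcont.continuousOn ⟨hgy1, hgy0⟩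
  obtain ⟨c, hcmem, hgc⟩ := hivt
  have hcA : c ∈ Ioo a 1 := ⟨lt_trans hy0m.1 hcmem.1, lt_trans hcmem.2 hy1m.2⟩
  -- the 2-cycle
  have hc0 : 0 < c := lt_trans ha hcA.1
  have hhpos : 0 < (1 - c) * (c - a) :=
    mul_pos (by linarith [hcA.2]) (by linarith [hcA.1])
  have hexp1 : 1 < Real.exp (r * (1 - c) * (c - a)) := by
    have : (0:ℝ) < r * (1 - c) * (c - a) := by nlinarith
    simpa using Real.exp_lt_exp.mpr this
  have hx2gt : c < f c := by
    rw [hfx c]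
    nlinarith
  have hfca : a < f c := lt_trans hcA.1 hx2gt
  have he1 : (1 - c) * (c - a) + (1 - f c) * (f c - a) = 0 := by
    rw [← hgx c]; exact hgc
  have hfc1 : 1 < f c := by nlinarith
  have hffc : f (f c) = c := by
    rw [hff c, hgc]
    simp
  have hgfc : g (f c) = 0 := by
    rw [hgx (f c), hffc]
    linarith
  refine ⟨hga, hg1, hda, hdapos, hd1, hd1pos, c, hcA, f c, hfc1, hgc, hgfc, rfl, hffc⟩
end

section
/- Consider the planar map F(x,y) = (x e^{r(1-x)(x-a) - y}, βx(1 - e^{-y})) with 0 < a < 1 and r, β > 0. Every forward orbit with nonnegative initial data remains nonnegative and is bounded: x(t) ≤ f(x_m) and y(t) ≤ β f(x_m) for all t ≥ 2, where f(x)=x e^{r(1-x)(x-a)} and x_m is its critical point. Moreover, if x(0) ≤ a and (x(0),y(0)) ≠ (a,0), or x(0) ≥ x_a and (x(0),y(0)) ≠ (x_a,0), then (x(t),y(t)) → (0,0). -/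
open Real Filter Set

private lemma hasDerivAt_f (a r : ℝ) (u : ℝ) :
    HasDerivAt (fun x => x * Real.exp (r * (1 - x) * (x - a)))
      (Real.exp (r * (1 - u) * (u - a)) * (1 + u * (r * ((1 - u) - (u - a))))) u := by
  have hg : HasDerivAt (fun x => r * (1 - x) * (x - a))
      (r * ((1 - u) - (u - a))) u := by
    have h1 : HasDerivAt (fun x : ℝ => r * (1 - x)) (0 * (1 - u) + r * (0 - 1)) u :=
      (hasDerivAt_const u r).mul ((hasDerivAt_const u (1:ℝ)).sub (hasDerivAt_id u))
    have h2 : HasDerivAt (fun x : ℝ => x - a) (1 - 0) u :=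
      (hasDerivAt_id u).sub (hasDerivAt_const u a)
    have h3 := h1.fun_mul h2
    exact h3.congr_deriv (by ring)
  have he := hg.exp
  have h4 := (hasDerivAt_id u).fun_mul he
  exact h4.congr_deriv (by simp only [id_eq]; ring)

private lemma f_props (a r : ℝ) (ha : 0 < a) (ha1 : a < 1) (hr : 0 < r)
    (xm : ℝ) (hxm : xm = (1 + a) / 4 + Real.sqrt ((a + 1) ^ 2 * r ^ 2 + 8 * r) / (4 * r)) :
    0 < xm ∧
    (∀ u, 0 ≤ u → u * Real.exp (r * (1 - u) * (u - a)) ≤ xm * Real.exp (r * (1 - xm) * (xm - a))) ∧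
    StrictAntiOn (fun x => x * Real.exp (r * (1 - x) * (x - a))) (Ici xm) := by
  set s := Real.sqrt ((a + 1) ^ 2 * r ^ 2 + 8 * r) with hsdef
  have hsnn : 0 ≤ s := Real.sqrt_nonneg _
  have hs : s ^ 2 = (a + 1) ^ 2 * r ^ 2 + 8 * r := Real.sq_sqrt (by positivity)
  have hspos : (a + 1) * r < s := by
    rw [hsdef]
    rw [show (a+1)^2*r^2+8*r = ((a+1)*r)^2 + 8*r by ring]
    nlinarith [Real.sqrt_lt_sqrt (by positivity : (0:ℝ) ≤ ((a+1)*r)^2)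
      (by nlinarith : ((a+1)*r)^2 < ((a+1)*r)^2 + 8*r),
      Real.sqrt_sq (by positivity : (0:ℝ) ≤ (a+1)*r)]
  have h4 : 4 * r * xm = r * (1 + a) + s := by
    rw [hxm]; field_simp
  have hxmpos : 0 < xm := by nlinarith
  have hxm_lb : 1 + a < 2 * xm := by nlinarith
  have hq0 : 2 * r * xm ^ 2 - r * (1 + a) * xm - 1 = 0 := by
    have h8 : (2 * r * xm ^ 2 - r * (1 + a) * xm - 1) * (8 * r) = 0 := by
      linear_combination (4 * r * xm + s - r * (1 + a)) * h4 + hs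
    rcases mul_eq_zero.mp h8 with h | h
    · exact h
    · nlinarith
  have hqfact : ∀ u : ℝ, 1 + u * (r * ((1 - u) - (u - a)))
      = (xm - u) * (2 * r * (u + xm) - r * (1 + a)) := by
    intro u; linear_combination -hq0
  have hqpos : ∀ u, 0 ≤ u → u < xm → 0 < 1 + u * (r * ((1 - u) - (u - a))) := by
    intro u hu hum
    rw [hqfact u]
    have : 0 < 2 * r * (u + xm) - r * (1 + a) := by nlinarith
    nlinarith
  have hqneg : ∀ u, xm < u → 1 + u * (r * ((1 - u) - (u - a))) < 0 := by
    intro u hum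
    rw [hqfact u]
    have : 0 < 2 * r * (u + xm) - r * (1 + a) := by nlinarith
    nlinarith
  have hcont : Continuous (fun x : ℝ => x * Real.exp (r * (1 - x) * (x - a))) := by
    fun_prop
  have hmono : StrictMonoOn (fun x : ℝ => x * Real.exp (r * (1 - x) * (x - a))) (Icc 0 xm) := by
    apply strictMonoOn_of_deriv_pos (convex_Icc 0 xm) hcont.continuousOn
    intro u hu
    rw [interior_Icc] at hu
    rw [(hasDerivAt_f a r u).deriv]
    exact mul_pos (Real.exp_pos _) (hqpos u hu.1.le hu.2)
  have hanti : StrictAntiOn (fun x : ℝ => x * Real.exp (r * (1 - x) * (x - a))) (Ici xm) := by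
    apply strictAntiOn_of_deriv_neg (convex_Ici xm) hcont.continuousOn
    intro u hu
    rw [interior_Ici] at hu
    rw [(hasDerivAt_f a r u).deriv]
    exact mul_neg_of_pos_of_neg (Real.exp_pos _) (hqneg u hu)
  refine ⟨hxmpos, ?_, hanti⟩
  intro u hu
  rcases le_or_gt u xm with h | h
  · exact hmono.monotoneOn ⟨hu, h⟩ ⟨hxmpos.le, le_refl xm⟩ h
  · exact (hanti self_mem_Ici (mem_Ici.mpr h.le) h).le

theorem stmt_15 (a r β : ℝ) (ha : 0 < a) (ha1 : a < 1) (hr : 0 < r) (hβ : 0 < β)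
    (f : ℝ → ℝ) (hf : f = fun x => x * Real.exp (r * (1 - x) * (x - a)))
    (xm : ℝ)
    (hxm : xm = (1 + a) / 4 + Real.sqrt ((a + 1) ^ 2 * r ^ 2 + 8 * r) / (4 * r))
    (xa : ℝ) (hxa1 : max 1 xm < xa) (hxa : f xa = a)
    (x y : ℕ → ℝ) (hx0 : 0 ≤ x 0) (hy0 : 0 ≤ y 0)
    (hrec : ∀ t, x (t + 1) = x t * Real.exp (r * (1 - x t) * (x t - a) - y t) ∧
                 y (t + 1) = β * x t * (1 - Real.exp (-(y t)))) :
    (∀ t, 0 ≤ x t ∧ 0 ≤ y t) ∧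
    (∀ t, 2 ≤ t → x t ≤ f xm ∧ y t ≤ β * f xm) ∧
    (((x 0 ≤ a ∧ (x 0, y 0) ≠ (a, 0)) ∨ (xa ≤ x 0 ∧ (x 0, y 0) ≠ (xa, 0))) →
      Tendsto x atTop (nhds 0) ∧ Tendsto y atTop (nhds 0)) := by
  obtain ⟨hxmpos, hfmax, hanti⟩ := f_props a r ha ha1 hr xm hxm
  subst hf
  -- nonnegativity
  have hnn : ∀ t, 0 ≤ x t ∧ 0 ≤ y t := by
    intro t
    induction t with
    | zero => exact ⟨hx0, hy0⟩
    | succ n ih =>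
      obtain ⟨hxn, hyn⟩ := ih
      constructor
      · rw [(hrec n).1]
        exact mul_nonneg hxn (Real.exp_pos _).le
      · rw [(hrec n).2]
        have : Real.exp (-(y n)) ≤ 1 := Real.exp_le_one_iff.mpr (by linarith)
        have := mul_nonneg (mul_nonneg hβ.le hxn) (by linarith : 0 ≤ 1 - Real.exp (-(y n)))
        linarith
  -- boundedness of x for t ≥ 1
  have hxb : ∀ t, x (t + 1) ≤ xm * Real.exp (r * (1 - xm) * (xm - a)) := by
    intro t
    rw [(hrec t).1]
    have h1 : Real.exp (r * (1 - x t) * (x t - a) - y t)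
        ≤ Real.exp (r * (1 - x t) * (x t - a)) :=
      Real.exp_le_exp.mpr (by linarith [(hnn t).2])
    calc x t * Real.exp (r * (1 - x t) * (x t - a) - y t)
        ≤ x t * Real.exp (r * (1 - x t) * (x t - a)) :=
          mul_le_mul_of_nonneg_left h1 (hnn t).1
      _ ≤ xm * Real.exp (r * (1 - xm) * (xm - a)) := hfmax (x t) (hnn t).1
  -- bound on y (t+1) by β * x t
  have hyb : ∀ t, y (t + 1) ≤ β * x t := by
    intro t
    rw [(hrec t).2]
    have h1 : 1 - Real.exp (-(y t)) ≤ 1 := by linarith [(Real.exp_pos (-(y t)))]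
    have h2 : 0 ≤ β * x t := mul_nonneg hβ.le (hnn t).1
    nlinarith
  -- decay lemma
  have hdecay : ∀ t0 c, x t0 ≤ c → c < a →
      Tendsto x atTop (nhds 0) ∧ Tendsto y atTop (nhds 0) := by
    intro t0 c hc hca
    have hc0 : 0 ≤ c := le_trans (hnn t0).1 hc
    set q := Real.exp (-(r * (1 - c) * (a - c))) with hqdef
    have hq0 : 0 ≤ q := (Real.exp_pos _).le
    have hq1 : q < 1 := by
      rw [hqdef]
      apply Real.exp_lt_one_iff.mpr
      have : 0 < r * (1 - c) * (a - c) := by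
        apply mul_pos (mul_pos hr (by linarith)) (by linarith)
      linarith
    have hgeo : ∀ n, x (t0 + n) ≤ c * q ^ n := by
      intro n
      induction n with
      | zero => simpa using hc
      | succ m ih =>
        have hqm1 : q ^ m ≤ 1 := pow_le_one₀ hq0 hq1.le
        have hxc : x (t0 + m) ≤ c := le_trans ih (by nlinarith)
        have hx0m : 0 ≤ x (t0 + m) := (hnn _).1
        have hG : r * (1 - x (t0 + m)) * (x (t0 + m) - a) - y (t0 + m)
            ≤ -(r * (1 - c) * (a - c)) := by
          have hy := (hnn (t0 + m)).2
          nlinarith [mul_nonneg (by linarith : (0:ℝ) ≤ 1 - c) (by linarith : (0:ℝ) ≤ c - x (t0+m)),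
            mul_nonneg (by linarith : (0:ℝ) ≤ c - x (t0+m)) (by linarith : (0:ℝ) ≤ a - x (t0+m))]
        have hstep : x (t0 + (m + 1)) ≤ x (t0 + m) * q := by
          have := (hrec (t0 + m)).1
          rw [show t0 + (m + 1) = (t0 + m) + 1 by ring, this]
          exact mul_le_mul_of_nonneg_left (Real.exp_le_exp.mpr hG) hx0m
        calc x (t0 + (m + 1)) ≤ x (t0 + m) * q := hstep
          _ ≤ (c * q ^ m) * q := mul_le_mul_of_nonneg_right ih hq0
          _ = c * q ^ (m + 1) := by ring
    have hgx : Tendsto (fun n : ℕ => c * q ^ n) atTop (nhds 0) := by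
      simpa using (tendsto_pow_atTop_nhds_zero_of_lt_one hq0 hq1).const_mul c
    have htx0 : Tendsto (fun n => x (t0 + n)) atTop (nhds 0) :=
      squeeze_zero (fun n => (hnn _).1) hgeo hgx
    have htx : Tendsto x atTop (nhds 0) := by
      have h2 : Tendsto (fun n => x (n + t0)) atTop (nhds 0) := by
        simpa [Nat.add_comm] using htx0
      exact (Filter.tendsto_add_atTop_iff_nat t0).mp h2
    refine ⟨htx, ?_⟩
    have h3 : Tendsto (fun t => β * x t) atTop (nhds 0) := by
      simpa using htx.const_mul β
    have h4 : Tendsto (fun t => y (t + 1)) atTop (nhds 0) :=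
      squeeze_zero (fun t => (hnn _).2) hyb h3
    exact (Filter.tendsto_add_atTop_iff_nat 1).mp h4
  refine ⟨hnn, ?_, ?_⟩
  · -- boundedness
    intro t ht
    obtain ⟨u, rfl⟩ : ∃ u, t = u + 2 := ⟨t - 2, by omega⟩
    constructor
    · exact hxb (u + 1)
    · calc y (u + 2) ≤ β * x (u + 1) := hyb (u + 1)
        _ ≤ β * (xm * Real.exp (r * (1 - xm) * (xm - a))) :=
          mul_le_mul_of_nonneg_left (hxb u) hβ.le
  · -- convergence
    rintro (⟨hle, hne⟩ | ⟨hge, hne⟩)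
    · rcases lt_or_eq_of_le hle with h | h
      · exact hdecay 0 (x 0) le_rfl h
      · -- x 0 = a, so y 0 ≠ 0 hence y 0 > 0
        have hy0ne : y 0 ≠ 0 := by
          intro h0; exact hne (by rw [h, h0])
        have hy0pos : 0 < y 0 := lt_of_le_of_ne hy0 (Ne.symm hy0ne)
        have hx1 : x 1 < a := by
          have := (hrec 0).1
          rw [this, h]
          have : r * (1 - a) * (a - a) - y 0 = -(y 0) := by ring
          rw [this]
          have he1 : Real.exp (-(y 0)) < 1 := Real.exp_lt_one_iff.mpr (by linarith)
          nlinarith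
        exact hdecay 1 (x 1) le_rfl hx1
    · -- xa ≤ x 0
      have hxa' : xa * Real.exp (r * (1 - xa) * (xa - a)) = a := hxa
      have hxm_xa : xm < xa := lt_of_le_of_lt (le_max_right 1 xm) hxa1
      have h1xa : 1 < xa := lt_of_le_of_lt (le_max_left 1 xm) hxa1
      have hfx0 : x 0 * Real.exp (r * (1 - x 0) * (x 0 - a)) ≤ a := by
        rcases lt_or_eq_of_le hge with h | h
        · have := hanti (mem_Ici.mpr hxm_xa.le) (mem_Ici.mpr (by linarith)) h
          simp only at this
          rw [hxa'] at this
          exact this.le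
        · rw [← h]; exact le_of_eq hxa'
      have hx1eq : x 1 = (x 0 * Real.exp (r * (1 - x 0) * (x 0 - a))) * Real.exp (-(y 0)) := by
        rw [(hrec 0).1, sub_eq_add_neg, Real.exp_add]
        ring
      have hfx0pos : 0 < x 0 * Real.exp (r * (1 - x 0) * (x 0 - a)) :=
        mul_pos (by linarith) (Real.exp_pos _)
      have hexpy : Real.exp (-(y 0)) ≤ 1 := Real.exp_le_one_iff.mpr (by linarith)
      have hx1le : x 1 ≤ a := by
        rw [hx1eq]
        nlinarith
      rcases lt_or_eq_of_le hx1le with h | h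
      · exact hdecay 1 (x 1) le_rfl h
      · -- x 1 = a forces y 0 = 0 and x 0 = xa, contradiction
        exfalso
        have hy00 : y 0 = 0 := by
          by_contra hy0ne
          have hy0pos : 0 < y 0 := lt_of_le_of_ne hy0 (Ne.symm hy0ne)
          have he1 : Real.exp (-(y 0)) < 1 := Real.exp_lt_one_iff.mpr (by linarith)
          rw [hx1eq] at h
          nlinarith
        have hfx0eq : x 0 * Real.exp (r * (1 - x 0) * (x 0 - a)) = a := by
          rw [hx1eq, hy00] at h
          simpa using h
        have hx0eq : x 0 = xa := by
          by_contra hne2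
          have hlt : xa < x 0 := lt_of_le_of_ne hge (Ne.symm hne2 |> fun h' => h')
          have := hanti (mem_Ici.mpr hxm_xa.le) (mem_Ici.mpr (by linarith)) hlt
          simp only at this
          rw [hxa'] at this
          linarith
        exact hne (by rw [hx0eq, hy00])
end

section
/- Let 0 < a < 1, 0 < r ≤ 2/(1-a) and for x ∈ (a,1) put y = r(1-x)(x-a) and φ(x) = x(1 - e^{-y})/y. Then φ'(x) > 0 for all x ∈ (a,1). Consequently, for each β with a < 1/β < 1 there is exactly one x ∈ (a,1) with φ(x) = 1/β, i.e., system (2.2) has a unique interior steady state. -/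
open Real Set

lemma exp_neg_lt_quad {y : ℝ} (hy : 0 < y) : Real.exp (-y) < 1 - y + y^2/2 := by
  have hmono : StrictMonoOn (fun t : ℝ => 1 - t + t^2/2 - Real.exp (-t)) (Ici 0) := by
    apply strictMonoOn_of_deriv_pos (convex_Ici 0)
    · fun_prop
    · intro t ht
      rw [interior_Ici] at ht
      have hd : HasDerivAt (fun t : ℝ => 1 - t + t^2/2 - Real.exp (-t))
          (-1 + t + Real.exp (-t)) t := by
        have h1 : HasDerivAt (fun t : ℝ => Real.exp (-t)) (Real.exp (-t) * (-1)) t :=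
          ((hasDerivAt_id t).neg.congr_deriv rfl).exp
        have h2 : HasDerivAt (fun t : ℝ => 1 - t + t^2/2 - Real.exp (-t))
            ((0 - 1 + (2 * t^1)/2) - Real.exp (-t) * (-1)) t :=
          (((hasDerivAt_const t (1:ℝ)).sub (hasDerivAt_id t)).add
            ((hasDerivAt_pow 2 t).div_const 2)).sub h1
        convert h2 using 1; ring
      rw [hd.deriv]
      have ht' : (0:ℝ) < t := ht
      have := Real.add_one_lt_exp (neg_ne_zero.mpr ht'.ne')
      linarith
  have h := hmono (self_mem_Ici) (le_of_lt hy : (0:ℝ) ≤ y) hy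
  simp at h
  linarith

lemma keyB {y : ℝ} (hy : 0 < y) : 0 < y - 2 + (y + 2) * Real.exp (-y) := by
  have hmono : StrictMonoOn (fun t : ℝ => (t - 2) * Real.exp t + t + 2) (Ici 0) := by
    apply strictMonoOn_of_deriv_pos (convex_Ici 0)
    · fun_prop
    · intro t ht
      rw [interior_Ici] at ht
      have ht' : (0:ℝ) < t := ht
      have hd : HasDerivAt (fun t : ℝ => (t - 2) * Real.exp t + t + 2)
          ((t - 1) * Real.exp t + 1) t := by
        have h2 : HasDerivAt (fun t : ℝ => (t - 2) * Real.exp t + t + 2)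
            (((1 - 0) * Real.exp t + (t - 2) * Real.exp t) + 1 + 0) t :=
          ((((hasDerivAt_id t).sub (hasDerivAt_const t 2)).mul (Real.hasDerivAt_exp t)).add
            (hasDerivAt_id t)).add (hasDerivAt_const t 2)
        convert h2 using 1; ring
      rw [hd.deriv]
      have h1 := Real.add_one_lt_exp (neg_ne_zero.mpr ht'.ne')
      have h2 : Real.exp (-t) * Real.exp t = 1 := by
        rw [← Real.exp_add]; simp
      have h3 : (0:ℝ) < Real.exp t := Real.exp_pos t
      nlinarith
  have h := hmono (self_mem_Ici) (le_of_lt hy : (0:ℝ) ≤ y) hy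
  simp at h
  have h2 : Real.exp (-y) * Real.exp y = 1 := by rw [← Real.exp_add]; simp
  have h3 : (0:ℝ) < Real.exp (-y) := Real.exp_pos _
  nlinarith

lemma keyB' {y : ℝ} (hy : 0 < y) : 0 < y - 2 + (y + 2) * Real.exp (-y) := keyB hy

lemma phi_deriv_pos (a r : ℝ) (ha : 0 < a) (ha1 : a < 1) (hr : 0 < r)
    (hr2 : r ≤ 2 / (1 - a)) {x : ℝ} (hax : a < x) (hx1 : x < 1) :
    ∃ D, HasDerivAt
      (fun t => t * (1 - Real.exp (-(r * (1 - t) * (t - a)))) / (r * (1 - t) * (t - a))) D x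
      ∧ 0 < D := by
  set y := r * (1 - x) * (x - a) with hydef
  have hy : 0 < y := mul_pos (mul_pos hr (by linarith)) (by linarith)
  set yd := r * (1 + a - 2 * x) with hyddef
  have hYd : HasDerivAt (fun t => r * (1 - t) * (t - a)) yd x := by
    have h := ((hasDerivAt_const x r).mul
        ((hasDerivAt_const x (1:ℝ)).sub (hasDerivAt_id x))).mul
        ((hasDerivAt_id x).sub (hasDerivAt_const x a))
    refine h.congr_deriv ?_; simp only [Pi.sub_apply, Pi.mul_apply, id_eq]; rw [hyddef]; ring
  have hE : HasDerivAt (fun t => Real.exp (-(r * (1 - t) * (t - a))))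
      (Real.exp (-y) * -yd) x := hYd.neg.exp
  have hN : HasDerivAt (fun t => t * (1 - Real.exp (-(r * (1 - t) * (t - a)))))
      (1 * (1 - Real.exp (-y)) + x * (0 - Real.exp (-y) * -yd)) x :=
    (hasDerivAt_id x).mul ((hasDerivAt_const x 1).sub hE)
  refine ⟨_, hN.div hYd hy.ne', ?_⟩
  set E := Real.exp (-y) with hEdef
  have hE0 : 0 < E := Real.exp_pos _
  have hE1 : E < 1 := by rw [hEdef]; exact Real.exp_lt_one_iff.mpr (by linarith)
  have hA : (1 + y) * E < 1 := by
    rw [hEdef]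
    have h1 := Real.add_one_lt_exp hy.ne'
    have h2 : Real.exp (-y) * Real.exp y = 1 := by rw [← Real.exp_add]; simp
    nlinarith [Real.exp_pos (-y), Real.exp_pos y]
  have hB := keyB' hy
  -- c = x * yd ≤ 2
  have hc2 : x * yd ≤ 2 := by
    rcases le_or_gt (1 + a - 2 * x) 0 with h | h
    · have : x * yd ≤ 0 := by
        rw [hyddef]
        exact mul_nonpos_of_nonneg_of_nonpos (by linarith) (mul_nonpos_of_nonneg_of_nonpos hr.le h)
      linarith
    · have hq : 0 ≤ 2 * x^2 - (1 + a) * x + (1 - a) := by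
        nlinarith [sq_nonneg (x - a), sq_nonneg (1 - x), mul_pos (sub_pos.mpr hax) (sub_pos.mpr hx1), sq_nonneg (2 * x - a - 1)]
      have hxq : x * (1 + a - 2 * x) ≤ 1 - a := by nlinarith
      have hra : r * (1 - a) ≤ 2 := by
        rw [div_eq_mul_inv] at hr2
        have h1a : (0:ℝ) < 1 - a := by linarith
        calc r * (1 - a) ≤ 2 * (1 - a)⁻¹ * (1 - a) := by nlinarith [inv_pos.mpr h1a]
        _ = 2 := by field_simp
      rw [hyddef]
      calc x * (r * (1 + a - 2 * x)) = r * (x * (1 + a - 2 * x)) := by ring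
      _ ≤ r * (1 - a) := by nlinarith
      _ ≤ 2 := hra
  have hnum : 0 < (1 * (1 - E) + x * (0 - E * -yd)) * y - x * (1 - E) * yd := by
    have hrew : (1 * (1 - E) + x * (0 - E * -yd)) * y - x * (1 - E) * yd
        = y * (1 - E) + (x * yd) * ((1 + y) * E - 1) := by ring
    rw [hrew]
    rcases le_or_gt (x * yd) 0 with h | h
    · nlinarith
    · nlinarith
  exact div_pos hnum (by positivity)

section helpers
variable (a r : ℝ)

lemma phi_lt (ha : 0 < a) (hr : 0 < r) {x : ℝ} (hax : a < x) (hx1 : x < 1) :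
    x * (1 - Real.exp (-(r * (1 - x) * (x - a)))) / (r * (1 - x) * (x - a)) < x := by
  set y := r * (1 - x) * (x - a) with hydef
  have hy : 0 < y := mul_pos (mul_pos hr (by linarith)) (by linarith)
  have h1 := Real.add_one_lt_exp (neg_ne_zero.mpr hy.ne')
  rw [div_lt_iff₀ hy]
  have hx0 : 0 < x := by linarith
  nlinarith
  
lemma exp_neg_lt_quad' {y : ℝ} (hy : 0 < y) : Real.exp (-y) < 1 - y + y^2/2 := exp_neg_lt_quad hy

lemma phi_gt (ha : 0 < a) (hr : 0 < r) {x : ℝ} (hax : a < x) (hx1 : x < 1) :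
    x * (1 - r * (1 - x) * (x - a) / 2) <
      x * (1 - Real.exp (-(r * (1 - x) * (x - a)))) / (r * (1 - x) * (x - a)) := by
  set y := r * (1 - x) * (x - a) with hydef
  have hy : 0 < y := mul_pos (mul_pos hr (by linarith)) (by linarith)
  have h1 := exp_neg_lt_quad' hy
  rw [lt_div_iff₀ hy]
  have hx0 : 0 < x := by linarith
  nlinarith
end helpers

theorem stmt_17 (a r : ℝ) (ha : 0 < a) (ha1 : a < 1) (hr : 0 < r)
    (hr2 : r ≤ 2 / (1 - a))
    (φ : ℝ → ℝ)
    (hφ : φ = fun x =>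
      x * (1 - Real.exp (-(r * (1 - x) * (x - a)))) / (r * (1 - x) * (x - a))) :
    (∀ x ∈ Set.Ioo a 1, 0 < deriv φ x) ∧
    (∀ β : ℝ, a < 1 / β → 1 / β < 1 →
      ∃! x : ℝ, x ∈ Set.Ioo a 1 ∧ φ x = 1 / β) := by
  subst hφ
  have hderiv : ∀ x ∈ Set.Ioo a 1, 0 < deriv (fun x =>
      x * (1 - Real.exp (-(r * (1 - x) * (x - a)))) / (r * (1 - x) * (x - a))) x := by
    intro x hx
    obtain ⟨D, hD, hDpos⟩ := phi_deriv_pos a r ha ha1 hr hr2 hx.1 hx.2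
    rw [hD.deriv]; exact hDpos
  have hcontOn : ∀ s ⊆ Set.Ioo a 1, ContinuousOn (fun x =>
      x * (1 - Real.exp (-(r * (1 - x) * (x - a)))) / (r * (1 - x) * (x - a))) s := by
    intro s hs x hx
    obtain ⟨D, hD, _⟩ := phi_deriv_pos a r ha ha1 hr hr2 (hs hx).1 (hs hx).2
    exact hD.continuousAt.continuousWithinAt
  have hmono : StrictMonoOn (fun x =>
      x * (1 - Real.exp (-(r * (1 - x) * (x - a)))) / (r * (1 - x) * (x - a)))
      (Set.Ioo a 1) := by
    apply strictMonoOn_of_deriv_pos (convex_Ioo a 1) (hcontOn _ le_rfl)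
    rw [interior_Ioo]
    exact hderiv
  refine ⟨hderiv, ?_⟩
  intro β hβa hβ1
  set c := 1 / β with hcdef
  set φ := fun x =>
      x * (1 - Real.exp (-(r * (1 - x) * (x - a)))) / (r * (1 - x) * (x - a)) with hφdef
  set x₁ := (a + c) / 2 with hx1def
  set x₂ := 1 - (1 - c) / (2 + r) with hx2def
  clear_value c x₁ x₂
  have hr2pos : (0:ℝ) < 2 + r := by linarith
  have hε : 0 < (1 - c) / (2 + r) := div_pos (by linarith) hr2pos
  have hεlt : (1 - c) / (2 + r) < 1 - c := by
    rw [div_lt_iff₀ hr2pos]; nlinarith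
  have hx1a : a < x₁ := by rw [hx1def]; linarith
  have hx1c : x₁ < c := by rw [hx1def]; linarith
  have hcx2 : c < x₂ := by rw [hx2def]; linarith
  have hx21 : x₂ < 1 := by rw [hx2def]; linarith
  have hsub : Set.Icc x₁ x₂ ⊆ Set.Ioo a 1 := fun z hz =>
    ⟨by linarith [hz.1], by linarith [hz.2]⟩
  -- φ x₁ < c
  have hφx1 : φ x₁ < c := lt_trans (phi_lt a r ha hr hx1a (by linarith)) hx1c
  -- c < φ x₂
  have hφx2 : c < φ x₂ := by
    show c < x₂ * (1 - Real.exp (-(r * (1 - x₂) * (x₂ - a)))) / (r * (1 - x₂) * (x₂ - a))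
    have h1 := phi_gt a r ha hr (show a < x₂ by linarith) hx21
    have hy2 : r * (1 - x₂) * (x₂ - a) ≤ r * ((1 - c) / (2 + r)) := by
      have h1x2 : 1 - x₂ = (1 - c) / (2 + r) := by rw [hx2def]; ring
      rw [h1x2]
      have hle : x₂ - a ≤ 1 := by linarith
      exact mul_le_of_le_one_right (le_of_lt (mul_pos hr hε)) hle
    have hrε : r * ((1 - c) / (2 + r)) = r * (1 - c) / (2 + r) := by ring
    have hkey : (1 + c) / 2 ≤ x₂ * (1 - r * (1 - x₂) * (x₂ - a) / 2) := by
      have hx20 : 0 < x₂ := by linarith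
      have hx2le : x₂ ≤ 1 := hx21.le
      have hy0 : 0 ≤ r * (1 - x₂) * (x₂ - a) :=
        le_of_lt (mul_pos (mul_pos hr (by linarith)) (by linarith))
      have step1 : x₂ - r * (1 - x₂) * (x₂ - a) / 2 ≤ x₂ * (1 - r * (1 - x₂) * (x₂ - a) / 2) := by
        have hq : x₂ * (1 - r * (1 - x₂) * (x₂ - a) / 2) - (x₂ - r * (1 - x₂) * (x₂ - a) / 2)
            = (1 - x₂) * (r * (1 - x₂) * (x₂ - a)) / 2 := by ring
        have hq2 := mul_nonneg (sub_nonneg.mpr hx2le) hy0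
        linarith
      have step2 : (1 + c) / 2 ≤ x₂ - r * (1 - x₂) * (x₂ - a) / 2 := by
        have hy2' : r * (1 - x₂) * (x₂ - a) ≤ r * (1 - c) / (2 + r) := by
          rw [← hrε]; exact hy2
        have hid : (1 - c) / (2 + r) + (r * (1 - c) / (2 + r)) / 2 = (1 - c) / 2 := by
          field_simp
        have hx2eq : x₂ = 1 - (1 - c) / (2 + r) := hx2def
        linarith [hy2', hid, hx2eq]
      linarith
    linarith
  -- IVT
  have hivt := intermediate_value_Icc (le_of_lt (lt_trans hx1c hcx2)) (hcontOn _ hsub)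
  have hcmem : c ∈ Set.Icc (φ x₁) (φ x₂) := ⟨hφx1.le, hφx2.le⟩
  obtain ⟨x, hxmem, hxeq⟩ := hivt hcmem
  refine ⟨x, ⟨hsub hxmem, hxeq⟩, ?_⟩
  rintro z ⟨hz, hze⟩
  exact hmono.injOn hz (hsub hxmem) (by rw [hze, hxeq])
end
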